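/- Let C be a preadditive category and Mat(C) its additive closure. Then the trace groups agree: Ξ(Mat(C)) ≅ Ξ(C), the isomorphism being induced by sending an endomorphism matrix (F_{ij}) of ⊕ᵢOᵢ to Σᵢ [F_{ii}] ∈ Ξ(C). -/

import Mathlib

open CategoryTheory
open scoped DirectSum

attribute [local instance] Classical.propDecidable

universe v u

/-- The direct sum of all endomorphism groups of a preadditive category. -/
abbrev EndSum (D : Type u) [Category.{v} D] [Preadditive D] : Type (max u v) :=
  ⨁ X : D, (X ⟶ X)

/-- The subgroup of trace relations `fg − gf`, for `f : X ⟶ Y`, `g : Y ⟶ X`. -/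
def traceRel (D : Type u) [Category.{v} D] [Preadditive D] : AddSubgroup (EndSum D) :=
  AddSubgroup.closure
    {x | ∃ (X Y : D) (f : X ⟶ Y) (g : Y ⟶ X),
      x = DirectSum.of (fun Z : D => Z ⟶ Z) X (f ≫ g)
        - DirectSum.of (fun Z : D => Z ⟶ Z) Y (g ≫ f)}

/-- The trace group `Ξ(D)` of a preadditive category `D`. -/
def Xi (D : Type u) [Category.{v} D] [Preadditive D] : Type (max u v) :=
  EndSum D ⧸ traceRel D

instance (D : Type u) [Category.{v} D] [Preadditive D] : AddCommGroup (Xi D) :=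
  QuotientAddGroup.Quotient.addCommGroup (traceRel D)

/-- The canonical class of an endomorphism in the trace group. -/
noncomputable def toXi {D : Type u} [Category.{v} D] [Preadditive D] {X : D} (f : X ⟶ X) : Xi D :=
  QuotientAddGroup.mk (DirectSum.of (fun Z : D => Z ⟶ Z) X f)

section Aux

variable {D : Type u} [Category.{v} D] [Preadditive D]

/-- `toXi` as an additive monoid hom. -/
noncomputable def toXiHom (X : D) : (X ⟶ X) →+ Xi D :=
  (QuotientAddGroup.mk' (traceRel D)).comp (DirectSum.of (fun Z : D => Z ⟶ Z) X)

lemma toXiHom_apply {X : D} (f : X ⟶ X) : toXiHom X f = toXi f := rfl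

lemma toXi_zero {X : D} : toXi (0 : X ⟶ X) = 0 := (toXiHom X).map_zero

lemma toXi_add {X : D} (f g : X ⟶ X) : toXi (f + g) = toXi f + toXi g :=
  (toXiHom X).map_add f g

lemma toXi_sum {X : D} {ι : Type*} (s : Finset ι) (f : ι → (X ⟶ X)) :
    toXi (∑ i ∈ s, f i) = ∑ i ∈ s, toXi (f i) :=
  map_sum (toXiHom X) f s

/-- Cyclicity of the trace class. -/
lemma toXi_comm {X Y : D} (f : X ⟶ Y) (g : Y ⟶ X) : toXi (f ≫ g) = toXi (g ≫ f) := by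
  refine (QuotientAddGroup.eq_iff_sub_mem ..).2 ?_
  exact AddSubgroup.subset_closure ⟨X, Y, f, g, rfl⟩

end Aux

variable (C : Type u) [Category.{v} C] [Preadditive C]

/-- The trace map on the endomorphism sum of `Mat_ C`, summing diagonal entries. -/
noncomputable def matTrace : EndSum (Mat_ C) →+ Xi C :=
  DirectSum.toAddMonoid fun M =>
    { toFun := fun f => ∑ i : M.ι, toXi (f i i)
      map_zero' := by
        simp only [show ∀ i : M.ι, (0 : M ⟶ M) i i = 0 from fun _ => rfl, toXi_zero,
          Finset.sum_const_zero]
      map_add' := fun f g => by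
        simp only [Mat_.add_apply, toXi_add, Finset.sum_add_distrib] }

lemma matTrace_of (M : Mat_ C) (f : M ⟶ M) :
    matTrace C (DirectSum.of (fun Z : Mat_ C => Z ⟶ Z) M f) = ∑ i : M.ι, toXi (f i i) := by
  simp [matTrace, DirectSum.toAddMonoid_of]

lemma matTrace_ker : traceRel (Mat_ C) ≤ (matTrace C).ker := by
  rw [traceRel, AddSubgroup.closure_le]
  rintro x ⟨M, N, f, g, rfl⟩
  simp only [SetLike.mem_coe, AddMonoidHom.mem_ker, map_sub, matTrace_of]
  rw [sub_eq_zero]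
  have h1 : ∑ i : M.ι, toXi ((f ≫ g) i i) = ∑ i : M.ι, ∑ j : N.ι, toXi (f i j ≫ g j i) := by
    simp only [Mat_.comp_apply, toXi_sum]
  have h2 : ∑ j : N.ι, toXi ((g ≫ f) j j) = ∑ j : N.ι, ∑ i : M.ι, toXi (g j i ≫ f i j) := by
    simp only [Mat_.comp_apply, toXi_sum]
  rw [h1, h2, Finset.sum_comm]
  exact Finset.sum_congr rfl fun j _ => Finset.sum_congr rfl fun i _ => toXi_comm _ _

/-- The embedding map on the endomorphism sum of `C`. -/
noncomputable def embSum : EndSum C →+ Xi (Mat_ C) :=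
  DirectSum.toAddMonoid fun X =>
    { toFun := fun f => toXi ((Mat_.embedding C).map f)
      map_zero' := by
        show toXi ((Mat_.embedding C).map (0 : X ⟶ X)) = 0
        rw [Functor.map_zero, toXi_zero]
      map_add' := fun f g => by
        show toXi ((Mat_.embedding C).map (f + g)) = _
        rw [Functor.map_add, toXi_add] }

lemma embSum_of (X : C) (f : X ⟶ X) :
    embSum C (DirectSum.of (fun Z : C => Z ⟶ Z) X f) = toXi ((Mat_.embedding C).map f) := by
  simp [embSum, DirectSum.toAddMonoid_of]

lemma embSum_ker : traceRel C ≤ (embSum C).ker := by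
  rw [traceRel, AddSubgroup.closure_le]
  rintro x ⟨X, Y, f, g, rfl⟩
  simp only [SetLike.mem_coe, AddMonoidHom.mem_ker, map_sub, embSum_of]
  rw [sub_eq_zero, Functor.map_comp, Functor.map_comp]
  exact toXi_comm _ _

/-- The induced map `Ξ(Mat C) → Ξ(C)`. -/
noncomputable def xiMat : Xi (Mat_ C) →+ Xi C :=
  QuotientAddGroup.lift _ (matTrace C) (matTrace_ker C)

lemma xiMat_toXi {M : Mat_ C} (f : M ⟶ M) :
    xiMat C (toXi f) = ∑ i : M.ι, toXi (f i i) :=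
  matTrace_of C M f

/-- The induced map `Ξ(C) → Ξ(Mat C)`. -/
noncomputable def xiEmb : Xi C →+ Xi (Mat_ C) :=
  QuotientAddGroup.lift _ (embSum C) (embSum_ker C)

lemma xiEmb_toXi {X : C} (f : X ⟶ X) :
    xiEmb C (toXi f) = toXi ((Mat_.embedding C).map f) :=
  embSum_of C X f

/-- In `Ξ(Mat C)`, the class of a matrix endomorphism equals the sum of the classes of its
diagonal entries regarded as one-by-one matrices. -/
lemma toXi_mat_diag (M : Mat_ C) (f : M ⟶ M) :
    (toXi f : Xi (Mat_ C)) = ∑ i : M.ι, toXi ((Mat_.embedding C).map (f i i)) := by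
  classical
  let P : ∀ i : M.ι, (M ⟶ (Mat_.embedding C).obj (M.X i)) := fun i j _ =>
    if h : j = i then eqToHom (congrArg M.X h) else 0
  let I : ∀ i : M.ι, ((Mat_.embedding C).obj (M.X i) ⟶ M) := fun i _ k =>
    if h : i = k then eqToHom (congrArg M.X h) else 0
  have hsum : ∑ i : M.ι, (f ≫ P i) ≫ I i = f := by
    ext j k
    have h0 : (∑ i : M.ι, (f ≫ P i) ≫ I i) j k = ∑ i : M.ι, ((f ≫ P i) ≫ I i) j k := by
      exact (congrFun (Finset.sum_apply (M := fun j => ∀ k, M.X j ⟶ M.X k) j Finset.univ (fun i => (f ≫ P i) ≫ I i)) k).trans (Finset.sum_apply k _ _)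
    rw [h0]
    simp only [Mat_.comp_apply]
    rw [Finset.sum_eq_single k]
    · haveI : Unique ((Mat_.embedding C).obj (M.X k)).ι := inferInstanceAs (Unique PUnit)
      rw [Fintype.sum_unique]
      simp [P, I, comp_dite]
      erw [eqToHom_trans, eqToHom_refl, Category.comp_id]
    · intro b _ hb
      simp [I, hb]
    · simp
  have hdiag : ∀ i : M.ι, I i ≫ (f ≫ P i) = (Mat_.embedding C).map (f i i) := by
    intro i
    ext a b
    simp only [Mat_.comp_apply]
    rw [Finset.sum_eq_single i]
    · simp [P, I, comp_dite, Mat_.embedding]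
      erw [Finset.sum_eq_single i]
      · erw [dif_pos rfl]
        exact Category.comp_id _
      · intro b _ hb
        simp [hb]
        exact Limits.comp_zero
      · simp
    · intro b _ hb
      simp [I, Ne.symm hb]
    · simp
  calc (toXi f : Xi (Mat_ C)) = toXi (∑ i : M.ι, (f ≫ P i) ≫ I i) := by rw [hsum]
    _ = ∑ i : M.ι, toXi ((f ≫ P i) ≫ I i) := toXi_sum _ _
    _ = ∑ i : M.ι, toXi ((Mat_.embedding C).map (f i i)) := by
        refine Finset.sum_congr rfl fun i _ => ?_
        rw [toXi_comm, hdiag]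

/-- The trace groups of a preadditive category `C` and of its additive closure
`Mat(C)` agree, the isomorphism sending (the class of) an endomorphism matrix
`(F_{ij})` of `⊕ᵢ Oᵢ` to `Σᵢ [F_{ii}]`. -/
theorem trace_group_Mat_eq (C : Type u) [Category.{v} C] [Preadditive C] :
    ∃ e : Xi (Mat_ C) ≃+ Xi C,
      ∀ (M : Mat_ C) (f : M ⟶ M),
        e (toXi f) = ∑ i : M.ι, toXi (f i i) := by
  refine ⟨AddMonoidHom.toAddEquiv (xiMat C) (xiEmb C) ?_ ?_, fun M f => xiMat_toXi C f⟩
  · apply QuotientAddGroup.addMonoidHom_ext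
    apply DirectSum.addHom_ext
    intro M f
    show xiEmb C (xiMat C (toXi f)) = toXi f
    rw [xiMat_toXi, map_sum]
    rw [Finset.sum_congr rfl (fun i _ => xiEmb_toXi C (f i i))]
    exact (toXi_mat_diag C M f).symm
  · apply QuotientAddGroup.addMonoidHom_ext
    apply DirectSum.addHom_ext
    intro X f
    show xiMat C (xiEmb C (toXi f)) = toXi f
    rw [xiEmb_toXi, xiMat_toXi]
    simp [Mat_.embedding]
    exact one_smul ℕ _
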